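/- (Uniqueness of the M-winning coalition representation; key step of Corollary 2.) Let N be a finite set of voters and let 𝒞 and 𝒞' be M-winning coalition sets on N whose associated M-winning coalition rules agree at every profile R : N → Bool. Then 𝒞 = 𝒞'. In particular, a neutral and strategy-proof rule is represented by a unique M-winning coalition set. -/
import Mathlib


/-- A rule is strategy-proof if whenever a voter's misreport would give his true
preference, truthful reporting gives it as well. -/
def StrategyProof {N : Type*} [DecidableEq N] (f : (N → Bool) → Bool) : Prop :=
  ∀ (R : N → Bool) (i : N) (b : Bool), f (Function.update R i b) = R i → f R = R i

/-- A rule is neutral if it commutes with flipping the two candidates. -/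
def Neutral {N : Type*} (f : (N → Bool) → Bool) : Prop :=
  ∀ R : N → Bool, f (fun i => !(R i)) = !(f R)

/-- An M-winning coalition set: nonempty, members nonempty, minimality (P1),
and Moulin's property (P2). -/
def IsMWCS {N : Type*} [DecidableEq N] (𝒞 : Set (Finset N)) : Prop :=
  𝒞.Nonempty ∧ (∀ C ∈ 𝒞, C.Nonempty) ∧
    (∀ C ∈ 𝒞, ∀ C' ∈ 𝒞, C ⊆ C' → C = C') ∧
    (∀ C : Finset N, (∃ C' ∈ 𝒞, C' ⊆ C) ↔ ∀ C'' ∈ 𝒞, (C ∩ C'').Nonempty)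

/-- `f` is the M-winning coalition rule associated with `𝒞`. -/
def IsMWCRule {N : Type*} (𝒞 : Set (Finset N)) (f : (N → Bool) → Bool) : Prop :=
  ∀ (R : N → Bool) (x : Bool), f R = x ↔ ∃ C ∈ 𝒞, ∀ i ∈ C, R i = x

/-- `g` is the sequential unanimity rule associated with the sequence `S`. -/
def IsSURule {N : Type*} {K : ℕ} (S : Fin K → Finset N) (g : (N → Bool) → Bool) : Prop :=
  ∀ (R : N → Bool) (x : Bool),
    g R = x ↔ ∃ k : Fin K, (∀ i ∈ S k, R i = x) ∧
      ∀ l < k, ∃ i ∈ S l, ∃ j ∈ S l, R i ≠ R j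

/-- Uniqueness of the M-winning coalition representation: two M-winning coalition sets
whose associated rules agree at every profile are equal. -/
lemma sub_step {N : Type*} [DecidableEq N] {𝒞 𝒞' : Set (Finset N)}
    {f f' : (N → Bool) → Bool}
    (hf : IsMWCRule 𝒞 f) (hf' : IsMWCRule 𝒞' f') (hagree : ∀ R, f R = f' R)
    {C : Finset N} (hC : C ∈ 𝒞) : ∃ C' ∈ 𝒞', C' ⊆ C := by
  set R : N → Bool := fun i => decide (i ∈ C) with hR
  have h1 : f R = true := (hf R true).mpr ⟨C, hC, fun i hi => by simp [hR, hi]⟩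
  have h2 : f' R = true := (hagree R) ▸ h1
  obtain ⟨C', hC', hall⟩ := (hf' R true).mp h2
  exact ⟨C', hC', fun i hi => by simpa [hR] using hall i hi⟩

lemma mem_step {N : Type*} [DecidableEq N] {𝒞 𝒞' : Set (Finset N)}
    (h𝒞 : IsMWCS 𝒞) {f f' : (N → Bool) → Bool}
    (hf : IsMWCRule 𝒞 f) (hf' : IsMWCRule 𝒞' f') (hagree : ∀ R, f R = f' R)
    {C : Finset N} (hC : C ∈ 𝒞) : C ∈ 𝒞' := by
  obtain ⟨C', hC', hsub⟩ := sub_step hf hf' hagree hC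
  obtain ⟨D, hD, hsub'⟩ := sub_step hf' hf (fun R => (hagree R).symm) hC'
  have : D = C := h𝒞.2.2.1 D hD C hC (hsub'.trans hsub)
  have : C = C' := le_antisymm (this ▸ hsub') hsub
  exact this ▸ hC'

theorem stmt9 {N : Type*} [Fintype N] [DecidableEq N] (𝒞 𝒞' : Set (Finset N))
    (h𝒞 : IsMWCS 𝒞) (h𝒞' : IsMWCS 𝒞') (f f' : (N → Bool) → Bool)
    (hf : IsMWCRule 𝒞 f) (hf' : IsMWCRule 𝒞' f') (hagree : ∀ R, f R = f' R) :
    𝒞 = 𝒞' := by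
  ext C
  exact ⟨fun h => mem_step h𝒞 hf hf' hagree h,
    fun h => mem_step h𝒞' hf' hf (fun R => (hagree R).symm) h⟩
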